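/- For every odd prime p, the sum over n from 0 to (p-1)/2 of ((1/2)_n)^2 / ((1)_n^2 (n+1)), viewed as an element of the p-adic integers, is congruent to 2p^2 modulo p^3. (Van Hamme (I.2)) -/

import Mathlib

open Polynomial Finset Nat

noncomputable def poch (x : ℚ) (n : ℕ) : ℚ := (ascPochhammer ℚ n).eval x

lemma poch_one_eq (n : ℕ) : poch 1 n = n ! := by simp [poch]

lemma poch_succ (x : ℚ) (n : ℕ) : poch x (n+1) = poch x n * (x + (n:ℚ)) := by
  simp [poch, ascPochhammer_succ_eval]

lemma poch_half_mul (n : ℕ) : poch (1/2) n * (4^n * n !) = (2*n)! := by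
  induction n with
  | zero => simp [poch]
  | succ n ih =>
    have h2 : ((2*(n+1))! : ℚ) = (2*n)! * ((2*n+1) * (2*n+2)) := by
      rw [show 2*(n+1) = (2*n+1)+1 by ring, Nat.factorial_succ, Nat.factorial_succ]
      push_cast; ring
    rw [poch_succ, h2, ← ih, Nat.factorial_succ]
    push_cast; ring

lemma sum_identity (N : ℕ) :
    ∑ n ∈ Finset.range (N+1), (poch (1/2) n)^2 / ((poch 1 n)^2 * (n + 1))
      = 4*(N+1) * (poch (1/2) (N+1) / poch 1 (N+1))^2 := by
  induction N with
  | zero =>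
    simp [poch_one_eq, poch_succ, poch]
    norm_num
  | succ N ih =>
    rw [Finset.sum_range_succ, ih]
    have hB : poch 1 (N+1) ≠ 0 := by
      rw [poch_one_eq]; exact_mod_cast (Nat.factorial_pos (N+1)).ne'
    have hN2 : ((N:ℚ) + 2) ≠ 0 := by positivity
    rw [poch_succ (1/2) (N+1), poch_succ 1 (N+1)]
    push_cast
    field_simp
    ring

lemma choose_pred_mod (p : ℕ) [hp : Fact p.Prime] :
    ∀ j, j ≤ p - 1 → ((Nat.choose (p-1) j : ZMod p)) = (-1)^j := by
  intro j
  induction j with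
  | zero => simp
  | succ j ih =>
    intro hj
    have hp1 : p - 1 + 1 = p := Nat.succ_pred_eq_of_pos hp.out.pos
    have h0 : ((Nat.choose p (j+1) : ZMod p)) = 0 := by
      rw [ZMod.natCast_eq_zero_iff]
      exact hp.out.dvd_choose_self (Nat.succ_ne_zero j) (by omega)
    have hss := Nat.choose_succ_succ' (p-1) j
    rw [hp1] at hss
    rw [hss] at h0
    push_cast at h0
    rw [ih (by omega)] at h0
    rw [pow_succ]
    linear_combination h0

/-- Van Hamme (I.2): for every odd prime `p`,
`∑_{n=0}^{(p-1)/2} ((1/2)_n)^2 / ((1)_n^2 (n+1)) ≡ 2p^2 (mod p^3)` in `ℤ_p`. -/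
theorem vanHamme_I2 (p : ℕ) [Fact p.Prime] (hp : p ≠ 2) :
    ‖((∑ n ∈ Finset.range ((p-1)/2 + 1),
        (poch (1/2) n)^2 / ((poch 1 n)^2 * (n + 1)) : ℚ) : ℚ_[p])
      - 2 * (p : ℚ_[p])^2‖ ≤ (p : ℝ) ^ (-3 : ℤ) := by
  have hp' : p.Prime := Fact.out
  have hp3 : 3 ≤ p := by
    rcases hp'.two_le.lt_or_eq with h | h
    · omega
    · omega
  obtain ⟨k, hk⟩ := hp'.odd_of_ne_two hp
  have hk1 : 1 ≤ k := by omega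
  have hdiv : (p-1)/2 = k := by omega
  have h2mp : 2*(k+1) = p + 1 := by omega
  -- binomial facts
  obtain ⟨c, hc⟩ := hp'.dvd_choose_self (show k+1 ≠ 0 by omega) (show k+1 < p by omega)
  have hsymm : Nat.choose p k = Nat.choose p (k+1) := by
    have h := Nat.choose_symm (show k+1 ≤ p by omega)
    rwa [show p - (k+1) = k by omega] at h
  have h2m : Nat.choose (2*(k+1)) (k+1) = 2 * (p * c) := by
    rw [h2mp, Nat.choose_succ_succ' p k, hsymm, ← hc]
    omega
  have hcm : c * (k+1) = Nat.choose (2*k) k := by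
    have h := Nat.add_one_mul_choose_eq (p-1) k
    rw [show p - 1 + 1 = p by omega,
      show p - 1 = 2*k by omega, hc] at h
    have h' : p * Nat.choose (2*k) k = p * (c * (k+1)) := by rw [h]; ring
    exact (Nat.eq_of_mul_eq_mul_left hp'.pos h').symm
  -- divisibility mod p
  have hmod : ((Nat.choose (2*k) k : ZMod p)) = (-1)^k := by
    have h := choose_pred_mod p k (by omega)
    rwa [show p - 1 = 2*k by omega] at h
  have hpD : (p:ℤ) ∣ (8*((k:ℤ)+1)*(c:ℤ)^2 - 16^(k+1)) := by
    rw [← ZMod.intCast_zmod_eq_zero_iff_dvd]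
    have h1 : (2:ZMod p)*((k:ZMod p)+1) = 1 := by
      have : (((2*(k+1) : ℕ)) : ZMod p) = ((p + 1 : ℕ) : ZMod p) := by rw [h2mp]
      push_cast [ZMod.natCast_self] at this
      linear_combination this
    have h2 : ((c:ZMod p)*((k:ZMod p)+1))^2 = 1 := by
      have : (((c*(k+1) : ℕ)) : ZMod p) = (-1)^k := by rw [hcm]; exact hmod
      push_cast at this
      rw [this, ← pow_mul, mul_comm k 2, pow_mul]
      norm_num
    have h4 : (4 : ZMod p) ≠ 0 := by
      have : ((4:ℕ) : ZMod p) ≠ 0 := by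
        rw [Ne, ZMod.natCast_eq_zero_iff]
        intro hdvd
        have := Nat.le_of_dvd (by norm_num) hdvd
        interval_cases p <;> omega
      simpa using this
    have h16 : (16 : ZMod p)^(k+1) = 16 := by
      have e1 : (16 : ZMod p)^(k+1) = 4^(2*(k+1)) := by
        rw [pow_mul]; norm_num
      rw [e1, h2mp, show p + 1 = (p-1) + 2 by omega, pow_add,
        ZMod.pow_card_sub_one_eq_one h4]
      norm_num
    push_cast
    rw [h16]
    linear_combination (-8*((k:ZMod p)+1)*(c:ZMod p)^2)*h1 + 16*h2
  -- the rational value of the sum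
  have hf : (((k+1)! : ℚ)) ≠ 0 := by exact_mod_cast (Nat.factorial_pos (k+1)).ne'
  have h4q : (4:ℚ)^(k+1) ≠ 0 := by positivity
  have hfact2m : (((2*(k+1))! : ℚ)) = 2*(p:ℚ)*c*(((k+1)! : ℚ) * ((k+1)! : ℚ)) := by
    have h := Nat.choose_mul_factorial_mul_factorial (show k+1 ≤ 2*(k+1) by omega)
    rw [show 2*(k+1) - (k+1) = k+1 by omega, h2m] at h
    rw [← h]; push_cast; ring
  have hpoch2 : poch (1/2) (k+1) = 2*(p:ℚ)*c*((k+1)! : ℚ)/4^(k+1) := by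
    have key : poch (1/2) (k+1) * (4^(k+1) * ((k+1)! : ℚ))
        = 2*(p:ℚ)*c*(((k+1)! : ℚ) * ((k+1)! : ℚ)) := by
      rw [poch_half_mul, hfact2m]
    have h' : (poch (1/2) (k+1) * 4^(k+1)) * ((k+1)! : ℚ)
        = (2*(p:ℚ)*c*((k+1)! : ℚ)) * ((k+1)! : ℚ) := by linear_combination key
    rw [eq_div_iff h4q]
    exact mul_right_cancel₀ hf h'
  have hS : (∑ n ∈ Finset.range ((p-1)/2 + 1),
      (poch (1/2) n)^2 / ((poch 1 n)^2 * (n + 1)) : ℚ)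
      = (16*((k:ℚ)+1)*(p:ℚ)^2*(c:ℚ)^2)/16^(k+1) := by
    rw [hdiv, sum_identity k, poch_one_eq, hpoch2,
      show (16:ℚ)^(k+1) = 4^(k+1)*4^(k+1) by rw [← mul_pow]; norm_num]
    field_simp
    ring
  -- p-adic estimate
  set A : ℤ := 2*(p:ℤ)^2*(8*((k:ℤ)+1)*(c:ℤ)^2 - 16^(k+1)) with hA
  set B : ℤ := 16^(k+1) with hB
  have hQ : (16*((k:ℚ)+1)*(p:ℚ)^2*(c:ℚ)^2)/16^(k+1) - 2*(p:ℚ)^2 = (A:ℚ)/(B:ℚ) := by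
    rw [hA, hB]
    push_cast
    field_simp
    ring
  have hmain : ((∑ n ∈ Finset.range ((p-1)/2 + 1),
      (poch (1/2) n)^2 / ((poch 1 n)^2 * (n + 1)) : ℚ) : ℚ_[p]) - 2 * (p : ℚ_[p])^2
      = (A : ℚ_[p])/(B : ℚ_[p]) := by
    rw [hS]
    have : ((((16*((k:ℚ)+1)*(p:ℚ)^2*(c:ℚ)^2)/16^(k+1) : ℚ)) : ℚ_[p]) - 2 * (p : ℚ_[p])^2
        = (((16*((k:ℚ)+1)*(p:ℚ)^2*(c:ℚ)^2)/16^(k+1) - 2*(p:ℚ)^2 : ℚ) : ℚ_[p]) := by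
      push_cast; ring
    rw [this, hQ]
    push_cast
    ring
  rw [hmain]
  have hAnorm : ‖(A : ℚ_[p])‖ ≤ (p : ℝ) ^ (-3 : ℤ) := by
    have h3 : ((p:ℤ)^3 ∣ A) := by
      obtain ⟨e, he⟩ := hpD
      rw [hA, he]
      exact ⟨2*e, by ring⟩
    have := (Padic.norm_int_le_pow_iff_dvd A 3).mpr h3
    exact_mod_cast this
  have hBnorm : ‖(B : ℚ_[p])‖ = 1 := by
    have hnd : ¬ ((p:ℤ) ∣ B) := by
      rw [hB]
      intro hdvd
      have h16 : (p:ℤ) ∣ 16 := (Nat.prime_iff_prime_int.mp hp').dvd_of_dvd_pow hdvd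
      have : (p:ℤ) ∣ 2 := by
        have : (p:ℤ) ∣ 2^4 := by norm_num at h16 ⊢; exact_mod_cast h16
        exact (Nat.prime_iff_prime_int.mp hp').dvd_of_dvd_pow this
      have : p ∣ 2 := by exact_mod_cast this
      have := Nat.le_of_dvd (by norm_num) this
      omega
    have hlt := (Padic.norm_intCast_lt_one_iff (k := B)).not.mpr hnd
    have hle : ‖(B : ℚ_[p])‖ ≤ 1 := Padic.norm_int_le_one B
    push_neg at hlt
    linarith
  rw [norm_div, hBnorm, div_one]
  exact hAnorm
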